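/- Let $A \in \mathbb{C}^{p\times p}$, $B \in \mathbb{C}^{p\times q}$, $D \in \mathbb{C}^{q\times q}$, $E \in \mathbb{C}^{p\times q}$ and let $m,n \geq 1$ be integers. The matrix equations $A^m X = B$ and $X D^n = E$ have a common solution $X \in \mathbb{C}^{p\times q}$ if and only if each equation separately has a solution and $A^m E = B D^n$. -/
import Mathlib

/-- Every linear endomorphism of a vector space has a generalized inverse. -/
lemma exists_linear_ginv {K V : Type*} [Field K] [AddCommGroup V] [Module K V]
    (f : V →ₗ[K] V) : ∃ g : V →ₗ[K] V, f ∘ₗ g ∘ₗ f = f := by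
  obtain ⟨C, hC⟩ := Submodule.exists_isCompl (LinearMap.range f)
  obtain ⟨s, hs⟩ := f.rangeRestrict.exists_rightInverse_of_surjective
    (LinearMap.range_rangeRestrict f)
  refine ⟨s ∘ₗ (LinearMap.range f).linearProjOfIsCompl C hC, ?_⟩
  ext x
  simp only [LinearMap.comp_apply]
  have h1 : (LinearMap.range f).linearProjOfIsCompl C hC (f x)
      = ⟨f x, LinearMap.mem_range_self f x⟩ :=
    Submodule.linearProjOfIsCompl_apply_left hC ⟨f x, LinearMap.mem_range_self f x⟩
  rw [h1]
  have h2 := LinearMap.congr_fun hs ⟨f x, LinearMap.mem_range_self f x⟩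
  have h3 : f (s ⟨f x, LinearMap.mem_range_self f x⟩)
      = (f.rangeRestrict (s ⟨f x, LinearMap.mem_range_self f x⟩) : V) := rfl
  rw [h3]
  rw [show f.rangeRestrict (s ⟨f x, LinearMap.mem_range_self f x⟩)
      = ⟨f x, LinearMap.mem_range_self f x⟩ from h2]

/-- Every square matrix over ℂ has a generalized inverse. -/
lemma exists_matrix_ginv {p : ℕ} (M : Matrix (Fin p) (Fin p) ℂ) :
    ∃ G : Matrix (Fin p) (Fin p) ℂ, M * G * M = M := by
  obtain ⟨g, hg⟩ := exists_linear_ginv (Matrix.toLin' M)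
  refine ⟨LinearMap.toMatrix' g, ?_⟩
  apply Matrix.toLin'.injective
  rw [Matrix.toLin'_mul, Matrix.toLin'_mul, Matrix.toLin'_toMatrix']
  exact hg

/-- Lemma 2.2: the equations `A^m X = B` and `X D^n = E` have a common solution
iff each has a solution separately and `A^m E = B D^n`. -/
theorem stmt_6 (p q m n : ℕ) (hm : 1 ≤ m) (hn : 1 ≤ n)
    (A : Matrix (Fin p) (Fin p) ℂ) (B : Matrix (Fin p) (Fin q) ℂ)
    (D : Matrix (Fin q) (Fin q) ℂ) (E : Matrix (Fin p) (Fin q) ℂ) :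
    (∃ X : Matrix (Fin p) (Fin q) ℂ, A ^ m * X = B ∧ X * D ^ n = E) ↔
    ((∃ X : Matrix (Fin p) (Fin q) ℂ, A ^ m * X = B) ∧
     (∃ X : Matrix (Fin p) (Fin q) ℂ, X * D ^ n = E) ∧
     A ^ m * E = B * D ^ n) := by
  constructor
  · rintro ⟨X, h1, h2⟩
    exact ⟨⟨X, h1⟩, ⟨X, h2⟩, by rw [← h1, ← h2, Matrix.mul_assoc]⟩
  · rintro ⟨⟨X1, h1⟩, ⟨X2, h2⟩, hcomp⟩
    obtain ⟨G, hG⟩ := exists_matrix_ginv (A ^ m)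
    refine ⟨G * B + X2 - G * (A ^ m * X2), ?_, ?_⟩
    · have : A ^ m * (G * B) = B := by
        rw [← h1, ← Matrix.mul_assoc, ← Matrix.mul_assoc, hG]
      rw [Matrix.mul_sub, Matrix.mul_add, this, ← Matrix.mul_assoc, ← Matrix.mul_assoc, hG]
      abel
    · rw [Matrix.sub_mul, Matrix.add_mul, h2, Matrix.mul_assoc G B, ← hcomp,
        Matrix.mul_assoc G, Matrix.mul_assoc (A ^ m), h2]
      abel
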